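/- Let k ≥ 1 be an integer and set ρ* = 1 − 1/(2k). The bivariate real polynomial P_k(a,b) = (1/4 + ρ*/4)·((1+a)^{2k}(1+b)^{2k} + (1−a)^{2k}(1−b)^{2k}) + (1/4 − ρ*/4)·((1+a)^{2k}(1−b)^{2k} + (1−a)^{2k}(1+b)^{2k}) − 1 is a sum of squares of polynomials in a and b. -/

import Mathlib

open MvPolynomial

open Finset

open Finset

lemma sum_range_even_odd {M : Type*} [AddCommMonoid M] (f : ℕ → M) (N : ℕ) :
    ∑ m ∈ range (2*N+1), f m
      = (∑ j ∈ range (N+1), f (2*j)) + ∑ j ∈ range N, f (2*j+1) := by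
  induction N with
  | zero => simp
  | succ N ih =>
      have h : 2*(N+1)+1 = (2*N+1) + 1 + 1 := by ring
      rw [h, Finset.sum_range_succ, Finset.sum_range_succ, ih,
        Finset.sum_range_succ (fun j => f (2*j)) (N+1),
        Finset.sum_range_succ (fun j => f (2*j+1)) N]
      have e1 : 2*N+1 = 2*N+1 := rfl
      have e2 : 2*(N+1) = 2*N+1+1 := by ring
      rw [e2]
      abel

lemma even_pow_sum {R : Type*} [CommRing R] (x y : R) (n : ℕ) :
    (x + y)^(2*n) + (x - y)^(2*n)
      = 2 * ∑ i ∈ range (n+1), (Nat.choose (2*n) (2*i) : R) * x^(2*i) * y^(2*n - 2*i) := by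
  rw [sub_eq_add_neg, add_pow, add_pow, ← Finset.sum_add_distrib]
  have h : 2*n + 1 = 2*n + 1 := rfl
  rw [sum_range_even_odd (fun m => x ^ m * y ^ (2*n - m) * ↑((2*n).choose m)
      + x ^ m * (-y) ^ (2*n - m) * ↑((2*n).choose m)) n]
  have hodd : ∀ j ∈ range n,
      (x ^ (2*j+1) * y ^ (2*n - (2*j+1)) * ((2*n).choose (2*j+1) : R)
        + x ^ (2*j+1) * (-y) ^ (2*n - (2*j+1)) * ((2*n).choose (2*j+1) : R)) = 0 := by
    intro j hj
    have hj' : j < n := mem_range.mp hj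
    have ho : Odd (2*n - (2*j+1)) := ⟨n - j - 1, by omega⟩
    rw [ho.neg_pow]
    ring
  rw [Finset.sum_congr rfl hodd, Finset.sum_const, smul_zero, add_zero, Finset.mul_sum]
  refine Finset.sum_congr rfl fun j hj => ?_
  have hj' : j < n + 1 := mem_range.mp hj
  have he : Even (2*n - 2*j) := ⟨n - j, by omega⟩
  rw [he.neg_pow]
  ring


lemma choose_id_nat (k m : ℕ) (hk : 1 ≤ k) (hm1 : 1 ≤ m) (hm2 : m ≤ 2*k) :
    2*k*((2*k-1) * Nat.choose (2*k-2) (m-1)) = m * ((2*k - m) * Nat.choose (2*k) m) := by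
  have A : 2*k * Nat.choose (2*k-1) (m-1) = Nat.choose (2*k) m * m := by
    have h := Nat.add_one_mul_choose_eq (2*k-1) (m-1)
    have e1 : 2*k-1+1 = 2*k := by omega
    have e2 : m-1+1 = m := by omega
    rw [e1, e2] at h
    exact h
  have B : (2*k-1) * Nat.choose (2*k-2) (m-1) = Nat.choose (2*k-1) m * m := by
    have h := Nat.add_one_mul_choose_eq (2*k-2) (m-1)
    have e1 : 2*k-2+1 = 2*k-1 := by omega
    have e2 : m-1+1 = m := by omega
    rw [e1, e2] at h
    exact h
  have E : Nat.choose (2*k-1) m * m = Nat.choose (2*k-1) (m-1) * (2*k - m) := by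
    have h := Nat.choose_succ_right_eq (2*k-1) (m-1)
    have e2 : m - 1 + 1 = m := by omega
    have e3 : 2*k-1 - (m-1) = 2*k - m := by omega
    rw [e2, e3] at h
    exact h
  calc 2*k*((2*k-1) * Nat.choose (2*k-2) (m-1))
      = 2*k*(Nat.choose (2*k-1) m * m) := by rw [B]
    _ = 2*k*(Nat.choose (2*k-1) (m-1) * (2*k-m)) := by rw [E]
    _ = (2*k * Nat.choose (2*k-1) (m-1)) * (2*k-m) := by ring
    _ = (Nat.choose (2*k) m * m) * (2*k-m) := by rw [A]
    _ = m * ((2*k - m) * Nat.choose (2*k) m) := by ring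

lemma choose_id_real (k m : ℕ) (hk : 1 ≤ k) (hm1 : 1 ≤ m) (hm2 : m ≤ 2*k) :
    2*(k:ℝ)*((2*(k:ℝ)-1) * (Nat.choose (2*k-2) (m-1) : ℝ))
      = (m:ℝ) * ((2*(k:ℝ) - m) * (Nat.choose (2*k) m : ℝ)) := by
  have h := choose_id_nat k m hk hm1 hm2
  have := congrArg (Nat.cast : ℕ → ℝ) h
  push_cast [Nat.cast_sub hm2, Nat.cast_sub (show 1 ≤ 2*k by omega)] at this
  linarith [this]

lemma choose_ratio1 (k m : ℕ) (hm1 : 1 ≤ m) (hm2 : m ≤ 2*k) :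
    (Nat.choose (2*k) m : ℝ) * m = (Nat.choose (2*k) (m-1) : ℝ) * (2*(k:ℝ) - m + 1) := by
  have h := Nat.choose_succ_right_eq (2*k) (m-1)
  have e2 : m - 1 + 1 = m := by omega
  rw [e2] at h
  have := congrArg (Nat.cast : ℕ → ℝ) h
  push_cast [Nat.cast_sub (show m-1 ≤ 2*k by omega), Nat.cast_sub hm1] at this
  rw [this]; ring

lemma choose_ratio2 (k m : ℕ) (hm2 : m ≤ 2*k) :
    (Nat.choose (2*k) (m+1) : ℝ) * (m+1) = (Nat.choose (2*k) m : ℝ) * (2*(k:ℝ) - m) := by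
  have h := Nat.choose_succ_right_eq (2*k) m
  have := congrArg (Nat.cast : ℕ → ℝ) h
  push_cast [Nat.cast_sub hm2] at this
  rw [this]

noncomputable def qE (k m : ℕ) : ℝ :=
  (Nat.choose (2*k) m : ℝ) * (2*(k:ℝ) + m*(2*(k:ℝ) - m)) / (2*(k:ℝ))

noncomputable def qO (k m : ℕ) : ℝ :=
  (Nat.choose (2*k) m : ℝ) * (((m:ℝ)-1)*(2*(k:ℝ)-1-m)) / (2*(k:ℝ))

lemma qE_pos (k m : ℕ) (hk : 1 ≤ k) (hm : m ≤ 2*k) : 0 < qE k m := by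
  have h1 : (0:ℝ) < Nat.choose (2*k) m := by exact_mod_cast Nat.choose_pos hm
  have h2 : (0:ℝ) < 2*(k:ℝ) := by
    have : (1:ℝ) ≤ (k:ℝ) := by exact_mod_cast hk
    linarith
  have h3 : ((m:ℝ)) ≤ 2*(k:ℝ) := by exact_mod_cast hm
  have h4 : (0:ℝ) ≤ (m:ℝ) := Nat.cast_nonneg m
  have h5 : (0:ℝ) < 2*(k:ℝ) + m*(2*(k:ℝ) - m) := by nlinarith
  unfold qE
  positivity

lemma key_ineq (x y : ℝ) (hx : 0 ≤ x) (hy : 0 ≤ y) :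
    (x*y)^2 * ((x+2)*(y+2)) ≤ ((x+1)*(y+1)) * ((x*y+3*x+y+2)*(x*y+x+3*y+2)) := by
  nlinarith [mul_nonneg hx hy, mul_nonneg (mul_nonneg hx hy) hy, mul_nonneg (mul_nonneg hx hx) hy,
    mul_nonneg (mul_nonneg (mul_nonneg hx hy) hx) hy,
    mul_nonneg (mul_nonneg (mul_nonneg (mul_nonneg hx hy) hx) hy) hx,
    mul_nonneg (mul_nonneg (mul_nonneg (mul_nonneg hx hy) hx) hy) hy,
    mul_nonneg (mul_nonneg (mul_nonneg (mul_nonneg (mul_nonneg hx hy) hx) hy) hx) hy,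
    mul_nonneg (mul_nonneg (mul_nonneg hx hx) hx) hy,
    mul_nonneg (mul_nonneg (mul_nonneg hx hy) hy) hy,
    sq_nonneg (x*y), sq_nonneg x, sq_nonneg y]

lemma gen_sq (c1 c2 c3 x y : ℝ) (hx : 0 ≤ x) (hy : 0 ≤ y)
    (h1 : c2*(x+1) = c1*(y+2)) (h2 : c3*(x+2) = c2*(y+1)) :
    (c2*(x*y)/(x+y+2))^2
      ≤ (c1*(x*y+3*x+y+2)/(x+y+2)) * (c3*(x*y+x+3*y+2)/(x+y+2)) := by
  have key := key_ineq x y hx hy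
  set A : ℝ := x*y+3*x+y+2 with hA
  set B : ℝ := x*y+x+3*y+2 with hB
  have h3 : (x+2)*(y+2)*((c1*A)*(c3*B)) = (x+1)*(y+1)*(A*B)*c2^2 := by
    linear_combination (A*B*(y+2)*c1) * h2 - (A*B*(y+1)*c2) * h1
  have h4 : c2^2*((x*y)^2*((x+2)*(y+2))) ≤ c2^2*(((x+1)*(y+1))*(A*B)) := by
    apply mul_le_mul_of_nonneg_left _ (sq_nonneg c2)
    calc (x*y)^2*((x+2)*(y+2)) ≤ ((x+1)*(y+1)) * (A*B) := key
      _ = ((x+1)*(y+1))*(A*B) := by ring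
  have h5 : ((x+2)*(y+2))*((c2*(x*y))^2) ≤ ((x+2)*(y+2))*((c1*A)*(c3*B)) := by
    calc ((x+2)*(y+2))*((c2*(x*y))^2) = c2^2*((x*y)^2*((x+2)*(y+2))) := by ring
      _ ≤ c2^2*(((x+1)*(y+1))*(A*B)) := h4
      _ = ((x+2)*(y+2))*((c1*A)*(c3*B)) := by linear_combination -h3
  have h6 : (c2*(x*y))^2 ≤ (c1*A)*(c3*B) := le_of_mul_le_mul_left h5 (by positivity)
  rw [div_pow, div_mul_div_comm, show (x+y+2)*(x+y+2) = (x+y+2)^2 from (pow_two _).symm]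
  exact (div_le_div_iff_of_pos_right (by positivity)).mpr h6

lemma main_sq_ineq (K j : ℕ) (hj1 : 1 ≤ j) (hj2 : j ≤ K) :
    qO (K+1) (2*j+1)^2 ≤ qE (K+1) (2*j) * qE (K+1) (2*j+2) := by
  have hKj : (j:ℝ) ≤ (K:ℝ) := by exact_mod_cast hj2
  have hx : (0:ℝ) ≤ 2*(j:ℝ) := by positivity
  have hy : (0:ℝ) ≤ 2*(K:ℝ) - 2*(j:ℝ) := by linarith
  have h1 : (Nat.choose (2*(K+1)) (2*j+1) : ℝ) * ((2*(j:ℝ))+1)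
      = (Nat.choose (2*(K+1)) (2*j) : ℝ) * ((2*(K:ℝ) - 2*(j:ℝ))+2) := by
    have h := choose_ratio1 (K+1) (2*j+1) (by omega) (by omega)
    rw [show 2*j+1-1 = 2*j from by omega] at h
    push_cast at h ⊢
    linarith [h]
  have h2 : (Nat.choose (2*(K+1)) (2*j+2) : ℝ) * ((2*(j:ℝ))+2)
      = (Nat.choose (2*(K+1)) (2*j+1) : ℝ) * ((2*(K:ℝ) - 2*(j:ℝ))+1) := by
    have h := choose_ratio2 (K+1) (2*j+1) (by omega)
    rw [show 2*j+1+1 = 2*j+2 from by omega] at h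
    push_cast at h ⊢
    linarith [h]
  have G := gen_sq (Nat.choose (2*(K+1)) (2*j) : ℝ) (Nat.choose (2*(K+1)) (2*j+1) : ℝ)
      (Nat.choose (2*(K+1)) (2*j+2) : ℝ) (2*(j:ℝ)) (2*(K:ℝ) - 2*(j:ℝ)) hx hy h1 h2
  have eqO : qO (K+1) (2*j+1)
      = (Nat.choose (2*(K+1)) (2*j+1) : ℝ) * ((2*(j:ℝ))*(2*(K:ℝ) - 2*(j:ℝ)))
        / ((2*(j:ℝ)) + (2*(K:ℝ) - 2*(j:ℝ)) + 2) := by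
    unfold qO; push_cast; ring
  have eqE1 : qE (K+1) (2*j)
      = (Nat.choose (2*(K+1)) (2*j) : ℝ)
        * ((2*(j:ℝ))*(2*(K:ℝ) - 2*(j:ℝ)) + 3*(2*(j:ℝ)) + (2*(K:ℝ) - 2*(j:ℝ)) + 2)
        / ((2*(j:ℝ)) + (2*(K:ℝ) - 2*(j:ℝ)) + 2) := by
    unfold qE; push_cast; ring
  have eqE2 : qE (K+1) (2*j+2)
      = (Nat.choose (2*(K+1)) (2*j+2) : ℝ)
        * ((2*(j:ℝ))*(2*(K:ℝ) - 2*(j:ℝ)) + (2*(j:ℝ)) + 3*(2*(K:ℝ) - 2*(j:ℝ)) + 2)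
        / ((2*(j:ℝ)) + (2*(K:ℝ) - 2*(j:ℝ)) + 2) := by
    unfold qE; push_cast; ring
  rw [eqO, eqE1, eqE2]
  exact G

lemma cf_even (K j : ℕ) (hj : j ≤ K) :
    (Nat.choose (2*(K+1)) (2*j+2) : ℝ) + (2*(K:ℝ)+1) * (Nat.choose (2*K) (2*j+1) : ℝ)
      = qE (K+1) (2*j+2) := by
  have h := choose_id_real (K+1) (2*j+2) (by omega) (by omega) (by omega)
  rw [show 2*(K+1)-2 = 2*K from by omega, show (2*j+2)-1 = 2*j+1 from by omega] at h
  unfold qE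
  have hden : 2*(((K:ℕ):ℝ)+1) ≠ 0 := by positivity
  push_cast at h ⊢
  field_simp
  linear_combination h/2

lemma cf_odd (K j : ℕ) (hj : j+1 ≤ K) :
    (2*(K:ℝ)+1)/(2*(K:ℝ)+2) * (Nat.choose (2*(K+1)) (2*j+3) : ℝ)
      - (2*(K:ℝ)+1) * (Nat.choose (2*K) (2*j+2) : ℝ)
      = -qO (K+1) (2*j+3) := by
  have h := choose_id_real (K+1) (2*j+3) (by omega) (by omega) (by omega)
  rw [show 2*(K+1)-2 = 2*K from by omega, show (2*j+3)-1 = 2*j+2 from by omega] at h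
  unfold qO
  push_cast at h ⊢
  have hden : 2*((K:ℝ)+1) ≠ 0 := by positivity
  field_simp
  linear_combination -h

noncomputable def rr (K j : ℕ) : ℝ :=
  qE (K+1) (2*j+2) - (if j < K then qE (K+1) (2*j+2)/2 else 0)
    - (if 1 ≤ j then qO (K+1) (2*j+1)^2/(2*qE (K+1) (2*j)) else 0)

lemma rr_nonneg (K j : ℕ) (hj : j ≤ K) : 0 ≤ rr K j := by
  have hE2 : 0 < qE (K+1) (2*j+2) := qE_pos _ _ (by omega) (by omega)
  unfold rr
  by_cases h2 : 1 ≤ j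
  · have hE0 : 0 < qE (K+1) (2*j) := qE_pos _ _ (by omega) (by omega)
    have key := main_sq_ineq K j h2 hj
    have hb : qO (K+1) (2*j+1)^2/(2*qE (K+1) (2*j)) ≤ qE (K+1) (2*j+2)/2 := by
      rw [div_le_div_iff₀ (by positivity) (by norm_num)]
      nlinarith [key]
    by_cases h1 : j < K
    · simp only [if_pos h1, if_pos h2]; linarith
    · simp only [if_neg h1, if_pos h2]; linarith
  · simp only [if_neg h2]
    by_cases h1 : j < K
    · simp only [if_pos h1]; linarith
    · simp only [if_neg h1]; linarith

variable {A : Type*} [CommRing A]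

lemma two_C (f : ℝ →+* A) (c : ℝ) : f (c/2) * 2 = f c := by
  rw [show (2:A) = f (2:ℝ) from (map_ofNat f 2).symm, ← map_mul]
  norm_num

lemma peel1 (f : ℝ →+* A) (c : ℝ) (x y : A) (n : ℕ) :
    f (c/2) * ((x+y)^(2*(n+1)) + (x-y)^(2*(n+1)))
      = f c * y^(2*(n+1))
        + ∑ j ∈ range (n+1), f c *
            ((Nat.choose (2*(n+1)) (2*j+2) : A) * x^(2*j+2) * y^(2*(n+1) - (2*j+2))) := by
  rw [even_pow_sum x y (n+1), ← mul_assoc, two_C, mul_sum, Finset.sum_range_succ']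
  rw [add_comm]
  have h0 : f c * ((Nat.choose (2*(n+1)) (2*0) : A) * x^(2*0) * y^(2*(n+1) - 2*0))
      = f c * y^(2*(n+1)) := by simp
  rw [h0]
  congr 1

lemma peel2 (f : ℝ →+* A) (c : ℝ) (x y : A) (n : ℕ) :
    f (c/2) * ((x+y)^(2*(n+1)) + (x-y)^(2*(n+1)))
      = f c * y^(2*(n+1))
        + f c * ((Nat.choose (2*(n+1)) 2 : A) * x^2 * y^(2*(n+1) - 2))
        + ∑ j ∈ range n, f c *
            ((Nat.choose (2*(n+1)) (2*j+4) : A) * x^(2*j+4) * y^(2*(n+1) - (2*j+4))) := by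
  rw [peel1 f c x y n, Finset.sum_range_succ']
  have e0 : (2*(0:ℕ)+2) = 2 := by ring
  rw [e0, add_assoc]
  congr 1
  rw [add_comm]
  congr 1

noncomputable def epc (K : ℕ) : ℝ := 1 - 1/(4*((K:ℝ)+1))
noncomputable def emc (K : ℕ) : ℝ := 1/(4*((K:ℝ)+1))
noncomputable def Gc (K m : ℕ) : ℝ := (epc K + (-1)^m * emc K) * (Nat.choose (2*(K+1)) m : ℝ)
noncomputable def Hc (K j : ℕ) : ℝ := (2*(K:ℝ)+1) * ((-1)^j * (Nat.choose (2*K) j : ℝ))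
noncomputable def cf (K m : ℕ) : ℝ := Gc K (m+2) - Hc K (m+1)

lemma Qexp (f : ℝ →+* A) (t : A) (K : ℕ) :
    f (epc K) * (1+t)^(2*(K+1)) + f (emc K) * (1-t)^(2*(K+1)) - 1
      - f (2*(K:ℝ)+1) * (t * (1-t)^(2*K))
      = ∑ m ∈ range (2*K+1), f (cf K m) * t^(m+2) := by
  have step1 : f (epc K) * (1+t)^(2*(K+1))
      = ∑ m ∈ range (2*(K+1)+1), f (epc K * (Nat.choose (2*(K+1)) m : ℝ)) * t^m := by
    rw [show (1+t) = t+1 from by ring, add_pow, mul_sum]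
    refine Finset.sum_congr rfl fun m _ => ?_
    rw [one_pow, mul_one, map_mul, map_natCast]
    ring
  have step2 : f (emc K) * (1-t)^(2*(K+1))
      = ∑ m ∈ range (2*(K+1)+1), f ((-1)^m * emc K * (Nat.choose (2*(K+1)) m : ℝ)) * t^m := by
    rw [show (1-t) = (-t)+1 from by ring, add_pow, mul_sum]
    refine Finset.sum_congr rfl fun m _ => ?_
    rw [one_pow, mul_one, neg_pow, map_mul, map_mul, map_pow, map_neg, map_one, map_natCast]
    ring
  have hA : f (epc K) * (1+t)^(2*(K+1)) + f (emc K) * (1-t)^(2*(K+1))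
      = ∑ m ∈ range (2*(K+1)+1), f (Gc K m) * t^m := by
    rw [step1, step2, ← Finset.sum_add_distrib]
    refine Finset.sum_congr rfl fun m _ => ?_
    rw [← add_mul, ← map_add]
    congr 2
    unfold Gc
    ring
  have hG0 : f (Gc K 0) * t^0 = 1 := by
    have : Gc K 0 = 1 := by unfold Gc epc emc; simp
    rw [this, map_one, pow_zero, mul_one]
  have hG1 : f (Gc K 1) * t^1 = f (2*(K:ℝ)+1) * t^1 := by
    congr 1
    congr 1
    unfold Gc epc emc
    have h : ((K:ℝ)+1) ≠ 0 := by positivity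
    simp [Nat.choose_one_right]
    push_cast
    field_simp
    ring
  have hPeel : (∑ m ∈ range (2*(K+1)+1), f (Gc K m) * t^m)
      = (∑ m ∈ range (2*K+1), f (Gc K (m+2)) * t^(m+2)) + f (2*(K:ℝ)+1) * t^1 + 1 := by
    rw [Finset.sum_range_succ' (fun m => f (Gc K m) * t^m) (2*(K+1)), hG0]
    rw [show 2*(K+1) = (2*K+1)+1 from by ring]
    rw [Finset.sum_range_succ' (fun m => f (Gc K (m+1)) * t^(m+1)) (2*K+1)]
    rw [show (0+1 : ℕ) = 1 from rfl]
    rw [hG1]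
  have step3 : f (2*(K:ℝ)+1) * (t * (1-t)^(2*K))
      = ∑ j ∈ range (2*K+1), f (Hc K j) * t^(j+1) := by
    rw [show (1-t) = (-t)+1 from by ring, add_pow, Finset.mul_sum, Finset.mul_sum]
    refine Finset.sum_congr rfl fun j _ => ?_
    rw [one_pow, mul_one, neg_pow]
    unfold Hc
    rw [map_mul, map_mul, map_pow, map_neg, map_one, map_natCast]
    ring
  have htop : f (Hc K (2*K+1)) * t^(2*K+1+1) = 0 := by
    have : Nat.choose (2*K) (2*K+1) = 0 := Nat.choose_eq_zero_of_lt (by omega)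
    unfold Hc
    rw [this]
    simp
  have hH : (∑ j ∈ range (2*K+1), f (Hc K j) * t^(j+1))
      = (∑ m ∈ range (2*K+1), f (Hc K (m+1)) * t^(m+2)) + f (2*(K:ℝ)+1) * t^1 := by
    rw [Finset.sum_range_succ' (fun j => f (Hc K j) * t^(j+1)) (2*K),
        Finset.sum_range_succ (fun m => f (Hc K (m+1)) * t^(m+2)) (2*K), htop, add_zero]
    have h0 : f (Hc K 0) * t^(0+1) = f (2*(K:ℝ)+1) * t^1 := by
      unfold Hc
      norm_num
    rw [h0]
  have hfinal : (∑ m ∈ range (2*K+1), f (Gc K (m+2)) * t^(m+2))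
      - (∑ m ∈ range (2*K+1), f (Hc K (m+1)) * t^(m+2))
      = ∑ m ∈ range (2*K+1), f (cf K m) * t^(m+2) := by
    rw [← Finset.sum_sub_distrib]
    refine Finset.sum_congr rfl fun m _ => ?_
    rw [← sub_mul, ← map_sub]
    rfl
  rw [hA, hPeel, step3, hH]
  linear_combination hfinal

noncomputable def al (K j : ℕ) : ℝ := Real.sqrt (qE (K+1) (2*j+2) / 2)
noncomputable def be (K j : ℕ) : ℝ := qO (K+1) (2*j+3) / (2 * al K j)

lemma sign_even (j : ℕ) : ((-1:ℝ))^(2*j) = 1 := by rw [pow_mul]; norm_num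

lemma cf_ev (K j : ℕ) (hj : j ≤ K) : cf K (2*j) = qE (K+1) (2*j+2) := by
  unfold cf Gc Hc
  rw [show 2*j+2 = 2*(j+1) from by ring, pow_mul, show 2*j+1 = 2*j+1 from rfl]
  have h1 : ((-1:ℝ))^(2*j+1) = -1 := by rw [pow_succ, sign_even]; norm_num
  rw [h1]
  have h2 : ((-1:ℝ)^2)^(j+1) = 1 := by norm_num
  rw [h2]
  have h3 : epc K + 1 * emc K = 1 := by unfold epc emc; ring
  rw [show 2*(j+1) = 2*j+2 from by ring]
  rw [h3]
  have := cf_even K j hj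
  linarith [this]

lemma cf_od (K j : ℕ) (hj : j < K) : cf K (2*j+1) = -qO (K+1) (2*j+3) := by
  unfold cf Gc Hc
  rw [show 2*j+1+2 = 2*(j+1)+1 from by ring, show 2*j+1+1 = 2*(j+1) from by ring]
  have h1 : ((-1:ℝ))^(2*(j+1)+1) = -1 := by rw [pow_succ, sign_even]; norm_num
  have h2 : ((-1:ℝ))^(2*(j+1)) = 1 := sign_even (j+1)
  rw [h1, h2]
  have h3 : epc K + (-1) * emc K = (2*(K:ℝ)+1)/(2*(K:ℝ)+2) := by
    unfold epc emc
    have h : ((K:ℝ)+1) ≠ 0 := by positivity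
    field_simp
    ring
  rw [h3, show 2*(j+1)+1 = 2*j+3 from by ring, show 2*(j+1) = 2*j+2 from by ring]
  have := cf_odd K j hj
  linarith [this]

variable {A : Type*} [CommRing A]

lemma SOS_eq (f : ℝ →+* A) (t : A) (K : ℕ) :
    ∑ m ∈ range (2*K+1), f (cf K m) * t^(m+2)
      = (∑ j ∈ range K, (f (al K j) * t^(j+1) - f (be K j) * t^(j+2))^2)
        + ∑ j ∈ range (K+1), (f (Real.sqrt (rr K j)) * t^(j+1))^2 := by
  have expandsq : ∀ (a b : ℝ) (p q : A),
      (f a * p - f b * q)^2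
        = f (a^2) * p^2 - f (2*a*b) * (p*q) + f (b^2) * q^2 := by
    intro a b p q
    rw [map_pow, map_pow, map_mul, map_mul, map_ofNat]
    ring
  have hS1 : (∑ j ∈ range K, (f (al K j) * t^(j+1) - f (be K j) * t^(j+2))^2)
      = ((∑ j ∈ range K, f (qE (K+1) (2*j+2)/2) * t^(2*j+2))
          + ∑ j ∈ range K, f (qO (K+1) (2*j+3)^2/(2*qE (K+1) (2*j+2))) * t^(2*j+4))
        - ∑ j ∈ range K, f (qO (K+1) (2*j+3)) * t^(2*j+3) := by
    rw [← Finset.sum_add_distrib, ← Finset.sum_sub_distrib]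
    refine Finset.sum_congr rfl fun j hj => ?_
    have hjK := mem_range.mp hj
    have hEpos : 0 < qE (K+1) (2*j+2) := qE_pos (K+1) (2*j+2) (by omega) (by omega)
    have hal2 : al K j ^ 2 = qE (K+1) (2*j+2)/2 := Real.sq_sqrt (by positivity)
    have halpos : 0 < al K j := Real.sqrt_pos.mpr (by positivity)
    have hab : 2 * al K j * be K j = qO (K+1) (2*j+3) := by
      unfold be; field_simp
    have hbe2 : be K j ^ 2 = qO (K+1) (2*j+3)^2 / (2*qE (K+1) (2*j+2)) := by
      unfold be
      rw [div_pow, mul_pow, hal2]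
      congr 1
      ring
    rw [expandsq, hal2, hab, hbe2]
    have hp2 : (t^(j+1))^2 = t^(2*j+2) := by rw [← pow_mul]; congr 1; ring
    have hq2 : (t^(j+2))^2 = t^(2*j+4) := by rw [← pow_mul]; congr 1; ring
    have hpq : t^(j+1) * t^(j+2) = t^(2*j+3) := by rw [← pow_add]; congr 1; ring
    rw [hp2, hq2, hpq]
    ring
  have hS2 : (∑ j ∈ range (K+1), (f (Real.sqrt (rr K j)) * t^(j+1))^2)
      = ∑ j ∈ range (K+1), f (rr K j) * t^(2*j+2) := by
    refine Finset.sum_congr rfl fun j hj => ?_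
    have hjK := mem_range.mp hj
    have hr : 0 ≤ rr K j := rr_nonneg K j (by omega)
    rw [mul_pow, ← map_pow, Real.sq_sqrt hr]
    congr 1
    rw [← pow_mul]
    congr 1
    ring
  rw [sum_range_even_odd (fun m => f (cf K m) * t^(m+2)) K]
  have hOdd : (∑ j ∈ range K, f (cf K (2*j+1)) * t^(2*j+1+2))
      = - ∑ j ∈ range K, f (qO (K+1) (2*j+3)) * t^(2*j+3) := by
    rw [← Finset.sum_neg_distrib]
    refine Finset.sum_congr rfl fun j hj => ?_
    rw [cf_od K j (mem_range.mp hj), map_neg]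
    have : (2*j+1+2) = 2*j+3 := by ring
    rw [this]
    ring
  have e2 : (∑ j ∈ range (K+1), (if j < K then f (qE (K+1) (2*j+2)/2) * t^(2*j+2) else 0))
      = ∑ j ∈ range K, f (qE (K+1) (2*j+2)/2) * t^(2*j+2) := by
    rw [Finset.sum_range_succ, if_neg (lt_irrefl K), add_zero]
    exact Finset.sum_congr rfl fun j hj => if_pos (mem_range.mp hj)
  have e3 : (∑ j ∈ range (K+1), (if 1 ≤ j then f (qO (K+1) (2*j+1)^2/(2*qE (K+1) (2*j))) * t^(2*j+2) else 0))
      = ∑ j ∈ range K, f (qO (K+1) (2*j+3)^2/(2*qE (K+1) (2*j+2))) * t^(2*j+4) := by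
    rw [Finset.sum_range_succ' (fun j => if 1 ≤ j then f (qO (K+1) (2*j+1)^2/(2*qE (K+1) (2*j))) * t^(2*j+2) else 0) K]
    rw [if_neg (by omega), add_zero]
    refine Finset.sum_congr rfl fun j hj => ?_
    rw [if_pos (by omega)]
    rw [show 2*(j+1)+2 = 2*j+4 from by ring, show 2*(j+1)+1 = 2*j+3 from by ring,
        show 2*(j+1) = 2*j+2 from by ring]
  have hEvenEq : (∑ j ∈ range (K+1), f (cf K (2*j)) * t^(2*j+2))
      = (∑ j ∈ range (K+1), f (rr K j) * t^(2*j+2))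
        + (∑ j ∈ range K, f (qE (K+1) (2*j+2)/2) * t^(2*j+2))
        + ∑ j ∈ range K, f (qO (K+1) (2*j+3)^2/(2*qE (K+1) (2*j+2))) * t^(2*j+4) := by
    rw [← e2, ← e3, ← Finset.sum_add_distrib, ← Finset.sum_add_distrib]
    refine Finset.sum_congr rfl fun j hj => ?_
    have hjK : j ≤ K := Nat.lt_succ_iff.mp (mem_range.mp hj)
    rw [cf_ev K j hjK]
    by_cases h1 : j < K <;> by_cases h2 : 1 ≤ j
    · rw [if_pos h1, if_pos h2, ← add_mul, ← map_add, ← add_mul, ← map_add]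
      congr 1
      unfold rr
      rw [if_pos h1, if_pos h2]
      ring
    · rw [if_pos h1, if_neg h2, add_zero, ← add_mul, ← map_add]
      congr 1
      unfold rr
      rw [if_pos h1, if_neg h2]
      ring
    · rw [if_neg h1, if_pos h2, add_zero, ← add_mul, ← map_add]
      congr 1
      unfold rr
      rw [if_neg h1, if_pos h2]
      ring
    · rw [if_neg h1, if_neg h2, add_zero, add_zero]
      congr 1
      unfold rr
      rw [if_neg h1, if_neg h2]
      ring
  rw [hEvenEq, hOdd, hS1, hS2]
  ring

lemma sum_sq_concat (F G : ℕ → A) (a b : ℕ) :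
    ∑ i ∈ range (a+b), (if i < a then F i else G (i-a))^2
      = (∑ i ∈ range a, (F i)^2) + ∑ i ∈ range b, (G i)^2 := by
  rw [Finset.sum_range_add]
  congr 1
  · exact Finset.sum_congr rfl fun i hi => by rw [if_pos (mem_range.mp hi)]
  · refine Finset.sum_congr rfl fun i hi => ?_
    rw [if_neg (by omega)]
    have e : a + i - a = i := by omega
    rw [e]

lemma epc_nonneg (K : ℕ) : 0 ≤ epc K := by
  unfold epc
  rw [sub_nonneg, div_le_one (by positivity)]
  nlinarith [Nat.cast_nonneg (α := ℝ) K]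

lemma emc_nonneg (K : ℕ) : 0 ≤ emc K := by
  unfold emc; positivity

lemma pack5 (p : A) (a1 a2 a3 a4 a5 : ℕ) (f1 f2 f3 f4 f5 : ℕ → A)
    (h : p = (∑ i ∈ range a1, (f1 i)^2) + (∑ i ∈ range a2, (f2 i)^2)
        + (∑ i ∈ range a3, (f3 i)^2) + (∑ i ∈ range a4, (f4 i)^2)
        + (∑ i ∈ range a5, (f5 i)^2)) :
    ∃ (m : ℕ) (q : Fin m → A), p = ∑ j, (q j)^2 := by
  set F : ℕ → A := fun i =>
    if i < a1 then f1 i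
    else if i < a1+a2 then f2 (i - a1)
    else if i < a1+a2+a3 then f3 (i - a1 - a2)
    else if i < a1+a2+a3+a4 then f4 (i - a1 - a2 - a3)
    else f5 (i - a1 - a2 - a3 - a4) with hF
  refine ⟨a1+a2+a3+a4+a5, fun j => F j.val, ?_⟩
  have hsum : ∑ i ∈ range (a1+a2+a3+a4+a5), (F i)^2
      = (∑ i ∈ range a1, (f1 i)^2) + (∑ i ∈ range a2, (f2 i)^2)
        + (∑ i ∈ range a3, (f3 i)^2) + (∑ i ∈ range a4, (f4 i)^2)
        + (∑ i ∈ range a5, (f5 i)^2) := by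
    rw [Finset.sum_range_add, Finset.sum_range_add, Finset.sum_range_add, Finset.sum_range_add]
    congr 1
    · congr 1
      · congr 1
        · congr 1
          · refine Finset.sum_congr rfl fun i hi => ?_
            have hi' := mem_range.mp hi
            simp only [hF]
            rw [if_pos hi']
          · refine Finset.sum_congr rfl fun i hi => ?_
            have hi' := mem_range.mp hi
            simp only [hF]
            rw [if_neg (by omega), if_pos (by omega)]
            have e : a1 + i - a1 = i := by omega
            rw [e]
        · refine Finset.sum_congr rfl fun i hi => ?_
          have hi' := mem_range.mp hi
          simp only [hF]
          rw [if_neg (by omega), if_neg (by omega), if_pos (by omega)]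
          have e : a1 + a2 + i - a1 - a2 = i := by omega
          rw [e]
      · refine Finset.sum_congr rfl fun i hi => ?_
        have hi' := mem_range.mp hi
        simp only [hF]
        rw [if_neg (by omega), if_neg (by omega), if_neg (by omega), if_pos (by omega)]
        have e : a1 + a2 + a3 + i - a1 - a2 - a3 = i := by omega
        rw [e]
    · refine Finset.sum_congr rfl fun i hi => ?_
      have hi' := mem_range.mp hi
      simp only [hF]
      rw [if_neg (by omega), if_neg (by omega), if_neg (by omega), if_neg (by omega)]
      have e : a1 + a2 + a3 + a4 + i - a1 - a2 - a3 - a4 = i := by omega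
      rw [e]
  rw [h, ← hsum, ← Fin.sum_univ_eq_sum_range (fun i => (F i)^2) (a1+a2+a3+a4+a5)]



/-- The Two-Point Inequality polynomial
`P_k(a,b) = (1/4 + ρ*/4)((1+a)^{2k}(1+b)^{2k} + (1−a)^{2k}(1−b)^{2k})
          + (1/4 − ρ*/4)((1+a)^{2k}(1−b)^{2k} + (1−a)^{2k}(1+b)^{2k}) − 1`,
with `ρ* = 1 − 1/(2k)`, is a sum of squares in `ℝ[a,b]`. -/
theorem stmt_7 (k : ℕ) (hk : 1 ≤ k) :
    ∃ (m : ℕ) (q : Fin m → MvPolynomial (Fin 2) ℝ),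
      C (1/4 + (1 - 1/(2*(k:ℝ)))/4) *
          ((1 + X 0)^(2*k) * (1 + X 1)^(2*k) + (1 - X 0)^(2*k) * (1 - X 1)^(2*k))
        + C (1/4 - (1 - 1/(2*(k:ℝ)))/4) *
          ((1 + X 0)^(2*k) * (1 - X 1)^(2*k) + (1 - X 0)^(2*k) * (1 + X 1)^(2*k))
        - 1
      = ∑ j, (q j)^2 := by

  obtain ⟨K, rfl⟩ : ∃ K, k = K + 1 := ⟨k - 1, by omega⟩
  set t : MvPolynomial (Fin 2) ℝ := X 0 * X 1 with ht
  set s : MvPolynomial (Fin 2) ℝ := X 0 + X 1 with hs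
  set d : MvPolynomial (Fin 2) ℝ := X 0 - X 1 with hd
  refine pack5 _ (K+1) K 1 K (K+1)
    (fun j => C (Real.sqrt (epc K * (Nat.choose (2*(K+1)) (2*j+2) : ℝ))) * (s^(j+1) * (1+t)^(K-j)))
    (fun j => C (Real.sqrt (emc K * (Nat.choose (2*(K+1)) (2*j+4) : ℝ))) * (d^(j+2) * (1-t)^(K-1-j)))
    (fun _ => C (Real.sqrt (emc K * (Nat.choose (2*(K+1)) 2 : ℝ))) * (s * (1-t)^K))
    (fun j => C (al K j) * t^(j+1) - C (be K j) * t^(j+2))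
    (fun j => C (Real.sqrt (rr K j)) * t^(j+1)) ?_
  rw [Finset.sum_range_one]
  have hfac1 : (1 + X 0 : MvPolynomial (Fin 2) ℝ)^(2*(K+1)) * (1 + X 1)^(2*(K+1))
      = (s + (1+t))^(2*(K+1)) := by
    rw [← mul_pow]; congr 1; rw [hs, ht]; ring
  have hfac2 : (1 - X 0 : MvPolynomial (Fin 2) ℝ)^(2*(K+1)) * (1 - X 1)^(2*(K+1))
      = (s - (1+t))^(2*(K+1)) := by
    rw [← mul_pow, show ((1:MvPolynomial (Fin 2) ℝ) - X 0) * (1 - X 1) = -(s - (1+t)) from by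
      rw [hs, ht]; ring, Even.neg_pow (even_two_mul (K+1))]
  have hfac3 : (1 + X 0 : MvPolynomial (Fin 2) ℝ)^(2*(K+1)) * (1 - X 1)^(2*(K+1))
      = (d + (1-t))^(2*(K+1)) := by
    rw [← mul_pow]; congr 1; rw [hd, ht]; ring
  have hfac4 : (1 - X 0 : MvPolynomial (Fin 2) ℝ)^(2*(K+1)) * (1 + X 1)^(2*(K+1))
      = (d - (1-t))^(2*(K+1)) := by
    rw [← mul_pow, show ((1:MvPolynomial (Fin 2) ℝ) - X 0) * (1 + X 1) = -(d - (1-t)) from by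
      rw [hd, ht]; ring, Even.neg_pow (even_two_mul (K+1))]
  have hKne : ((K:ℝ)+1) ≠ 0 := by positivity
  have hconst1 : (1/4 + (1 - 1/(2*(((K+1:ℕ)):ℝ)))/4 : ℝ) = epc K / 2 := by
    unfold epc; push_cast; field_simp; ring
  have hconst2 : (1/4 - (1 - 1/(2*(((K+1:ℕ)):ℝ)))/4 : ℝ) = emc K / 2 := by
    unfold emc; push_cast; field_simp; ring
  have hborrow : C (emc K) * ((Nat.choose (2*(K+1)) 2 : MvPolynomial (Fin 2) ℝ) * d^2 * (1-t)^(2*(K+1)-2))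
      = C (emc K) * ((Nat.choose (2*(K+1)) 2 : MvPolynomial (Fin 2) ℝ) * s^2 * (1-t)^(2*K))
        - C (2*(K:ℝ)+1) * (t * (1-t)^(2*K)) := by
    have hd2 : d^2 = s^2 - 4*t := by rw [hd, hs, ht]; ring
    have hexp : 2*(K+1)-2 = 2*K := by omega
    have hch2 : Nat.choose (2*(K+1)) 2 = (K+1)*(2*K+1) := by
      rw [Nat.choose_two_right, show 2*(K+1)-1 = 2*K+1 from by omega,
          show 2*(K+1)*(2*K+1) = 2*((K+1)*(2*K+1)) from by ring,
          Nat.mul_div_cancel_left _ (by norm_num)]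
    have hco : C (emc K) * ((Nat.choose (2*(K+1)) 2 : MvPolynomial (Fin 2) ℝ)) * 4 = C (2*(K:ℝ)+1) := by
      rw [← map_natCast (C : ℝ →+* MvPolynomial (Fin 2) ℝ) (Nat.choose (2*(K+1)) 2),
          show (4 : MvPolynomial (Fin 2) ℝ) = C (4:ℝ) from (map_ofNat _ 4).symm, ← map_mul, ← map_mul]
      congr 1
      rw [hch2]
      unfold emc
      push_cast
      field_simp
    rw [hexp, hd2]
    linear_combination (-(t * (1-t)^(2*K))) * hco
  have hQ : C (epc K) * (1+t)^(2*(K+1)) + C (emc K) * (1-t)^(2*(K+1)) - 1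
      - C (2*(K:ℝ)+1) * (t * (1-t)^(2*K))
      = (∑ j ∈ range K, (C (al K j) * t^(j+1) - C (be K j) * t^(j+2))^2)
        + ∑ j ∈ range (K+1), (C (Real.sqrt (rr K j)) * t^(j+1))^2 :=
    (Qexp (C : ℝ →+* MvPolynomial (Fin 2) ℝ) t K).trans (SOS_eq (C : ℝ →+* MvPolynomial (Fin 2) ℝ) t K)
  have hT1 : (∑ j ∈ range (K+1),
        (C (Real.sqrt (epc K * (Nat.choose (2*(K+1)) (2*j+2) : ℝ))) * (s^(j+1) * (1+t)^(K-j)))^2)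
      = ∑ j ∈ range (K+1), C (epc K) *
          ((Nat.choose (2*(K+1)) (2*j+2) : MvPolynomial (Fin 2) ℝ) * s^(2*j+2) * (1+t)^(2*(K+1) - (2*j+2))) := by
    refine Finset.sum_congr rfl fun j hj => ?_
    have hjK : j ≤ K := Nat.lt_succ_iff.mp (mem_range.mp hj)
    have hnn : 0 ≤ epc K * (Nat.choose (2*(K+1)) (2*j+2) : ℝ) :=
      mul_nonneg (epc_nonneg K) (Nat.cast_nonneg _)
    rw [mul_pow, ← map_pow, Real.sq_sqrt hnn, map_mul, map_natCast, mul_pow, ← pow_mul, ← pow_mul]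
    have e1 : (j+1)*2 = 2*j+2 := by ring
    have e2 : (K-j)*2 = 2*(K+1) - (2*j+2) := by omega
    rw [e1, e2]
    ring
  have hT2 : (∑ j ∈ range K,
        (C (Real.sqrt (emc K * (Nat.choose (2*(K+1)) (2*j+4) : ℝ))) * (d^(j+2) * (1-t)^(K-1-j)))^2)
      = ∑ j ∈ range K, C (emc K) *
          ((Nat.choose (2*(K+1)) (2*j+4) : MvPolynomial (Fin 2) ℝ) * d^(2*j+4) * (1-t)^(2*(K+1) - (2*j+4))) := by
    refine Finset.sum_congr rfl fun j hj => ?_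
    have hjK : j < K := mem_range.mp hj
    have hnn : 0 ≤ emc K * (Nat.choose (2*(K+1)) (2*j+4) : ℝ) :=
      mul_nonneg (emc_nonneg K) (Nat.cast_nonneg _)
    rw [mul_pow, ← map_pow, Real.sq_sqrt hnn, map_mul, map_natCast, mul_pow, ← pow_mul, ← pow_mul]
    have e1 : (j+2)*2 = 2*j+4 := by ring
    have e2 : (K-1-j)*2 = 2*(K+1) - (2*j+4) := by omega
    rw [e1, e2]
    ring
  have hT3 : (C (Real.sqrt (emc K * (Nat.choose (2*(K+1)) 2 : ℝ))) * (s * (1-t)^K))^2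
      = C (emc K) * ((Nat.choose (2*(K+1)) 2 : MvPolynomial (Fin 2) ℝ) * s^2 * (1-t)^(2*K)) := by
    have hnn : 0 ≤ emc K * (Nat.choose (2*(K+1)) 2 : ℝ) :=
      mul_nonneg (emc_nonneg K) (Nat.cast_nonneg _)
    rw [mul_pow, ← map_pow, Real.sq_sqrt hnn, map_mul, map_natCast, mul_pow, ← pow_mul]
    have e1 : K*2 = 2*K := by ring
    rw [e1]
    ring
  rw [hconst1, hconst2, hfac1, hfac2, hfac3, hfac4,
      peel1 (C : ℝ →+* MvPolynomial (Fin 2) ℝ) (epc K) s (1+t) K,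
      peel2 (C : ℝ →+* MvPolynomial (Fin 2) ℝ) (emc K) d (1-t) K, hborrow]
  linear_combination hQ - hT1 - hT2 - hT3
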